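/- arXiv:2211.16293 — 3 statements merged into one kernel-verified Lean document; each statement's English description precedes it below -/
import Mathlib

section
/- Weak SDP duality for the adversary bound: Let L be an operator on 𝒜⊗ℬ, ξ, τ ∈ 𝒜⊗ℬ⊗𝒞 with ξ ≠ 0. Suppose π̄ ⪰ 0 on 𝒜⊗ℬ satisfies tr_ℬ(L π̄ L† − π̄) = tr_{ℬ𝒞}(|τ⟩⟨τ| − |ξ⟩⟨ξ|), and Γ is a Hermitian operator on 𝒜 satisfying L†(Γ⊗I_ℬ)L − Γ⊗I_ℬ ⪯ I_{𝒜ℬ}. Then ⟨τ| (Γ⊗I_{ℬ𝒞}) |τ⟩ − ⟨ξ| (Γ⊗I_{ℬ𝒞}) |ξ⟩ ≤ tr(π̄). -/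
open Matrix Kronecker Finset

open scoped ComplexOrder

/-- `L` is subunitary: `‖Lφ‖ ≤ ‖φ‖` for all vectors `φ`. -/
noncomputable def Subunitary {n : Type*} [Fintype n] [DecidableEq n] (L : Matrix n n ℂ) : Prop :=
  ∀ φ : EuclideanSpace ℂ n, ‖Matrix.toEuclideanLin L φ‖ ≤ ‖φ‖

/-- Partial trace over the second factor `B`. -/
noncomputable def ptraceB {A B : Type*} [Fintype B] (M : Matrix (A × B) (A × B) ℂ) :
    Matrix A A ℂ :=
  Matrix.of fun i j => ∑ b : B, M (i, b) (j, b)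

/-- Partial trace over the factors `B` and `C`. -/
noncomputable def ptraceBC {A B C : Type*} [Fintype B] [Fintype C]
    (M : Matrix ((A × B) × C) ((A × B) × C) ℂ) : Matrix A A ℂ :=
  Matrix.of fun i j => ∑ b : B, ∑ c : C, M ((i, b), c) ((j, b), c)

/-- Partial trace over the second factor `C`. -/
noncomputable def ptraceC {H C : Type*} [Fintype C] (M : Matrix (H × C) (H × C) ℂ) :
    Matrix H H ℂ :=
  Matrix.of fun i j => ∑ c : C, M (i, c) (j, c)

open scoped MatrixOrder in
lemma trace_mul_nonneg' {n : Type*} [Fintype n] [DecidableEq n]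
    {X Y : Matrix n n ℂ} (hX : X.PosSemidef) (hY : Y.PosSemidef) :
    0 ≤ (X * Y).trace := by
  obtain ⟨B, rfl⟩ := CStarAlgebra.nonneg_iff_eq_star_mul_self.mp hY.nonneg
  rw [Matrix.star_eq_conjTranspose]
  rw [← Matrix.mul_assoc, Matrix.trace_mul_cycle]
  have h : (B * X * Bᴴ).PosSemidef := hX.mul_mul_conjTranspose_same B
  rw [Matrix.trace]
  apply Finset.sum_nonneg
  intro i _
  simpa [Matrix.mulVec_single, dotProduct, Pi.single_apply] using h.dotProduct_mulVec_nonneg (Pi.single i 1)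

lemma dot_eq_trace {n : Type*} [Fintype n] (M : Matrix n n ℂ) (v : n → ℂ) :
    star v ⬝ᵥ M.mulVec v = (M * Matrix.vecMulVec v (star v)).trace := by
  simp only [Matrix.trace, Matrix.diag_apply, Matrix.mul_apply, Matrix.vecMulVec_apply,
    dotProduct, Matrix.mulVec, Pi.star_apply, Finset.mul_sum]
  congr 1; ext i; congr 1; ext j; ring

lemma trace_kronB {A B : Type*} [Fintype A] [Fintype B] [DecidableEq B]
    (Γ : Matrix A A ℂ) (N : Matrix (A × B) (A × B) ℂ) :
    ((Γ ⊗ₖ (1 : Matrix B B ℂ)) * N).trace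
      = ∑ i : A, ∑ j : A, Γ i j * ∑ b : B, N (j, b) (i, b) := by
  simp only [Matrix.trace, Matrix.diag_apply, Matrix.mul_apply, Fintype.sum_prod_type,
    Matrix.kroneckerMap_apply, Matrix.one_apply, ite_mul, mul_ite, mul_zero, zero_mul,
    one_mul, mul_one, Finset.sum_ite_eq, Finset.sum_ite_eq', Finset.mem_univ, if_true,
    Finset.mul_sum]
  exact Finset.sum_congr rfl fun i _ => Finset.sum_comm

lemma trace_kronBC {A B C : Type*} [Fintype A] [Fintype B] [Fintype C]
    [DecidableEq B] [DecidableEq C]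
    (Γ : Matrix A A ℂ) (M : Matrix ((A × B) × C) ((A × B) × C) ℂ) :
    (((Γ ⊗ₖ (1 : Matrix B B ℂ)) ⊗ₖ (1 : Matrix C C ℂ)) * M).trace
      = ∑ i : A, ∑ j : A, Γ i j * ∑ b : B, ∑ c : C, M ((j, b), c) ((i, b), c) := by
  simp only [Matrix.trace, Matrix.diag_apply, Matrix.mul_apply, Fintype.sum_prod_type,
    Matrix.kroneckerMap_apply, Matrix.one_apply, ite_mul, mul_ite, mul_zero, zero_mul,
    one_mul, mul_one, Finset.sum_ite_eq, Finset.sum_ite_eq', Finset.mem_univ, if_true,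
    Finset.mul_sum]
  refine Finset.sum_congr rfl fun x _ => ?_
  exact (Finset.sum_congr rfl fun b _ => Finset.sum_comm).trans Finset.sum_comm

/-- Weak SDP duality for the adversary bound. -/
theorem stmt7 {A B C : Type*} [Fintype A] [Fintype B] [Fintype C]
    [DecidableEq A] [DecidableEq B] [DecidableEq C]
    (L : Matrix (A × B) (A × B) ℂ) (ξ τ : (A × B) × C → ℂ) (hξ : ξ ≠ 0)
    (πbar : Matrix (A × B) (A × B) ℂ) (hpsd : πbar.PosSemidef)
    (hprimal : ptraceB (L * πbar * Lᴴ - πbar) =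
      ptraceBC (Matrix.vecMulVec τ (star τ)) - ptraceBC (Matrix.vecMulVec ξ (star ξ)))
    (Γ : Matrix A A ℂ) (hΓ : Γ.IsHermitian)
    (hdual : ((1 : Matrix (A × B) (A × B) ℂ) -
      (Lᴴ * (Γ ⊗ₖ (1 : Matrix B B ℂ)) * L - Γ ⊗ₖ (1 : Matrix B B ℂ))).PosSemidef) :
    star τ ⬝ᵥ (((Γ ⊗ₖ (1 : Matrix B B ℂ)) ⊗ₖ (1 : Matrix C C ℂ)).mulVec τ) -
        star ξ ⬝ᵥ (((Γ ⊗ₖ (1 : Matrix B B ℂ)) ⊗ₖ (1 : Matrix C C ℂ)).mulVec ξ) ≤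
      πbar.trace := by
  set G := Γ ⊗ₖ (1 : Matrix B B ℂ) with hGdef
  have e1 : ∀ v : (A × B) × C → ℂ,
      star v ⬝ᵥ ((G ⊗ₖ (1 : Matrix C C ℂ)).mulVec v)
        = (Γ * ptraceBC (Matrix.vecMulVec v (star v))).trace := by
    intro v
    rw [dot_eq_trace, hGdef, trace_kronBC]
    simp [Matrix.trace, Matrix.mul_apply, ptraceBC, Finset.mul_sum]
  have e3 : ∀ N : Matrix (A × B) (A × B) ℂ,
      (G * N).trace = (Γ * ptraceB N).trace := by
    intro N
    rw [hGdef, trace_kronB]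
    simp [Matrix.trace, Matrix.mul_apply, ptraceB, Finset.mul_sum]
  rw [e1 τ, e1 ξ, ← Matrix.trace_sub, ← Matrix.mul_sub, ← hprimal, ← e3]
  have e4 : (G * (L * πbar * Lᴴ - πbar)).trace = ((Lᴴ * G * L - G) * πbar).trace := by
    rw [Matrix.mul_sub, Matrix.sub_mul, Matrix.trace_sub, Matrix.trace_sub]
    congr 1
    rw [show G * (L * πbar * Lᴴ) = (G * L * πbar) * Lᴴ by
      simp only [Matrix.mul_assoc], Matrix.trace_mul_comm]
    simp only [Matrix.mul_assoc]
  rw [e4]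
  have h0 : 0 ≤ (((1 : Matrix (A × B) (A × B) ℂ) -
      (Lᴴ * G * L - G)) * πbar).trace := trace_mul_nonneg' hdual hpsd
  rw [Matrix.sub_mul, Matrix.one_mul, Matrix.trace_sub, sub_nonneg] at h0
  exact h0
end

section
/- Universal algorithm feasibility: Let L on 𝒜⊗ℬ be an operator acting trivially on a unit vector |idle⟩ ∈ ℬ (L(φ⊗|idle⟩) = φ⊗|idle⟩ for all φ ∈ 𝒜). Let ρ_ξ, ρ_τ ⪰ 0 on 𝒜 and π̄ ⪰ 0 on 𝒜⊗ℬ satisfy tr_ℬ(L π̄ L† − π̄) = ρ_τ − ρ_ξ. For an integer T′ > 0 define π^j := ((T′−j)/T′ · ρ_ξ + j/T′ · ρ_τ) ⊗ |idle⟩⟨idle| + π̄/T′ for 0 ≤ j < T′. Then each π^j is positive semidefinite and tr_ℬ(π^{j+1}) = tr_ℬ(L π^j L†) for all 0 ≤ j ≤ T′−2. -/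
open Matrix Kronecker Finset

open scoped ComplexOrder

section Aux
variable {A B : Type*} [Fintype A] [Fintype B]

lemma ptraceB_add (M N : Matrix (A × B) (A × B) ℂ) :
    ptraceB (M + N) = ptraceB M + ptraceB N := by
  ext i j; simp [ptraceB, Finset.sum_add_distrib]

lemma ptraceB_sub (M N : Matrix (A × B) (A × B) ℂ) :
    ptraceB (M - N) = ptraceB M - ptraceB N := by
  ext i j; simp [ptraceB, Finset.sum_sub_distrib]

lemma ptraceB_smul (c : ℂ) (M : Matrix (A × B) (A × B) ℂ) :
    ptraceB (c • M) = c • ptraceB M := by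
  ext i j; simp [ptraceB, Finset.mul_sum]

lemma ptraceB_kron (σ : Matrix A A ℂ) (u : B → ℂ) (hu : star u ⬝ᵥ u = 1) :
    ptraceB (σ ⊗ₖ Matrix.vecMulVec u (star u)) = σ := by
  ext i j
  simp only [ptraceB, of_apply, kroneckerMap_apply, vecMulVec_apply, Pi.star_apply]
  rw [← Finset.mul_sum]
  have h : ∑ b, u b * star (u b) = 1 := by
    rw [← hu]; simp [dotProduct, mul_comm]
  rw [h, mul_one]

lemma psd_add {n : Type*} [Fintype n] {M N : Matrix n n ℂ}
    (hM : M.PosSemidef) (hN : N.PosSemidef) : (M + N).PosSemidef :=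
  ⟨hM.1.add hN.1, fun x => by
    simpa [mul_add, add_mul] using add_nonneg (hM.2 x) (hN.2 x)⟩

lemma psd_smul {n : Type*} [Fintype n] {M : Matrix n n ℂ} {c : ℂ} (hc : 0 ≤ c)
    (hM : M.PosSemidef) : (c • M).PosSemidef := by
  have hcs : star c = c := by
    rw [Complex.star_def, Complex.conj_eq_iff_im]
    simpa using ((Complex.le_def.mp hc)).2.symm
  constructor
  · show (c • M)ᴴ = c • M
    rw [conjTranspose_smul, hcs, hM.1]
  · intro x
    simpa [Finsupp.mul_sum, mul_assoc, mul_left_comm] using mul_nonneg hc (hM.2 x)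

lemma psd_kron_vv [DecidableEq A] {σ : Matrix A A ℂ} (hσ : σ.PosSemidef) (u : B → ℂ) :
    (σ ⊗ₖ Matrix.vecMulVec u (star u)).PosSemidef := by
  obtain ⟨C, hC⟩ : ∃ C : Matrix A A ℂ, σ = Cᴴ * C := by
    open scoped MatrixOrder in exact CStarAlgebra.nonneg_iff_eq_star_mul_self.mp hσ.nonneg
  set D : Matrix Unit B ℂ := Matrix.of fun _ b => star (u b) with hD
  have hvv : Matrix.vecMulVec u (star u) = Dᴴ * D := by
    ext b b'; simp [hD, vecMulVec_apply, mul_apply, conjTranspose_apply]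
  have hct : (C ⊗ₖ D)ᴴ = Cᴴ ⊗ₖ Dᴴ := by
    ext ⟨i, b⟩ ⟨j, b'⟩
    simp [conjTranspose_apply, kroneckerMap_apply, star_mul']
  have key : σ ⊗ₖ Matrix.vecMulVec u (star u) = (C ⊗ₖ D)ᴴ * (C ⊗ₖ D) := by
    rw [hC, hvv, hct, ← Matrix.mul_kronecker_mul]
  rw [key]
  exact Matrix.posSemidef_conjTranspose_mul_self _

lemma kron_vv_herm {σ : Matrix A A ℂ} (hσ : σ.IsHermitian) (u : B → ℂ) :
    (σ ⊗ₖ Matrix.vecMulVec u (star u)).IsHermitian := by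
  ext ⟨i, b⟩ ⟨j, b'⟩
  have hs : star (σ j i) = σ i j := congrFun (congrFun hσ i) j
  simp only [conjTranspose_apply, kroneckerMap_apply, vecMulVec_apply, Pi.star_apply,
    star_mul', star_star, hs]
  ring

lemma nat_div_nonneg (n m : ℕ) : (0 : ℂ) ≤ (n : ℂ) / (m : ℂ) := by
  have h : ((n : ℂ) / (m : ℂ)) = (((n : ℝ) / (m : ℝ) : ℝ) : ℂ) := by push_cast; ring
  rw [h]
  exact_mod_cast Complex.zero_le_real.mpr (by positivity)

end Aux

/-- Universal algorithm feasibility: the interpolating sequence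
`π^j = ((T'-j)/T'·ρξ + j/T'·ρτ) ⊗ |idle⟩⟨idle| + π̄/T'` is a feasible algorithm. -/
theorem stmt9 {A B : Type*} [Fintype A] [Fintype B] [DecidableEq A] [DecidableEq B]
    (L : Matrix (A × B) (A × B) ℂ) (idle : B → ℂ)
    (hunit : star idle ⬝ᵥ idle = 1)
    (hidle : ∀ φ : A → ℂ,
      L.mulVec (fun p : A × B => φ p.1 * idle p.2) = fun p : A × B => φ p.1 * idle p.2)
    (ρξ ρτ : Matrix A A ℂ) (hρξ : ρξ.PosSemidef) (hρτ : ρτ.PosSemidef)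
    (πbar : Matrix (A × B) (A × B) ℂ) (hπbar : πbar.PosSemidef)
    (hfeas : ptraceB (L * πbar * Lᴴ - πbar) = ρτ - ρξ)
    (T' : ℕ) (hT' : 0 < T') (π : ℕ → Matrix (A × B) (A × B) ℂ)
    (hdef : ∀ j, π j =
      (((((T' : ℂ) - (j : ℂ)) / (T' : ℂ)) • ρξ + (((j : ℂ)) / (T' : ℂ)) • ρτ) ⊗ₖ
        Matrix.vecMulVec idle (star idle)) + ((T' : ℂ))⁻¹ • πbar) :
    (∀ j < T', (π j).PosSemidef) ∧
      (∀ j, j + 1 ≤ T' - 1 → ptraceB (π (j + 1)) = ptraceB (L * π j * Lᴴ)) := by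
  have hTne : (T' : ℂ) ≠ 0 := Nat.cast_ne_zero.mpr hT'.ne'
  set σ : ℕ → Matrix A A ℂ := fun j =>
    ((((T' : ℂ) - (j : ℂ)) / (T' : ℂ)) • ρξ + (((j : ℂ)) / (T' : ℂ)) • ρτ) with hσdef
  -- L fixes matrices of the form τ ⊗ |idle⟩⟨idle|
  have hLfix : ∀ τ : Matrix A A ℂ,
      L * (τ ⊗ₖ Matrix.vecMulVec idle (star idle)) = τ ⊗ₖ Matrix.vecMulVec idle (star idle) := by
    intro τ
    ext ⟨i, b⟩ ⟨j, b'⟩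
    have h := congrFun (hidle fun a => τ a j * star (idle b')) (i, b)
    simp only [mulVec, dotProduct] at h
    have e1 : ∀ p : A × B, L (i, b) p * (τ ⊗ₖ Matrix.vecMulVec idle (star idle)) p (j, b')
        = L (i, b) p * ((fun a => τ a j * star (idle b')) p.1 * idle p.2) := by
      intro p
      simp only [kroneckerMap_apply, vecMulVec_apply, Pi.star_apply]
      ring
    rw [mul_apply, Finset.sum_congr rfl fun p _ => e1 p, h]
    simp only [kroneckerMap_apply, vecMulVec_apply, Pi.star_apply]
    ring
  have hσherm : ∀ j : ℕ, (σ j).IsHermitian := by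
    intro j
    have h1 : star (((T' : ℂ) - (j : ℂ)) / (T' : ℂ)) = ((T' : ℂ) - (j : ℂ)) / (T' : ℂ) := by
      simp [star_div₀, star_sub]
    have h2 : star ((j : ℂ) / (T' : ℂ)) = (j : ℂ) / (T' : ℂ) := by simp [star_div₀]
    show (σ j)ᴴ = σ j
    rw [hσdef]
    simp only [conjTranspose_add, conjTranspose_smul, h1, h2]
    rw [hρξ.1.eq, hρτ.1.eq]
  have hLconj : ∀ j : ℕ,
      L * (σ j ⊗ₖ Matrix.vecMulVec idle (star idle)) * Lᴴ
        = σ j ⊗ₖ Matrix.vecMulVec idle (star idle) := by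
    intro j
    set M := σ j ⊗ₖ Matrix.vecMulVec idle (star idle) with hM
    have herm : Mᴴ = M := kron_vv_herm (hσherm j) idle
    have h1 : L * M = M := hLfix (σ j)
    have h2 : M * Lᴴ = M := by
      calc M * Lᴴ = Mᴴ * Lᴴ := by rw [herm]
        _ = (L * M)ᴴ := by rw [conjTranspose_mul]
        _ = M := by rw [h1, herm]
    rw [h1, h2]
  constructor
  · intro j hj
    rw [hdef j]
    refine psd_add (psd_kron_vv (psd_add (psd_smul ?_ hρξ) (psd_smul ?_ hρτ)) idle)
      (psd_smul ?_ hπbar)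
    · have hc : ((T' : ℂ) - (j : ℂ)) / (T' : ℂ) = ((T' - j : ℕ) : ℂ) / (T' : ℂ) := by
        push_cast [Nat.cast_sub hj.le]; ring
      rw [hc]; exact nat_div_nonneg _ _
    · exact nat_div_nonneg _ _
    · simpa using nat_div_nonneg 1 T'
  · intro j _
    have hbar : ptraceB (L * πbar * Lᴴ) = (ρτ - ρξ) + ptraceB πbar := by
      have h := ptraceB_sub (L * πbar * Lᴴ) πbar
      rw [hfeas] at h
      exact sub_eq_iff_eq_add.mp h.symm
    have hexp : L * π j * Lᴴ = σ j ⊗ₖ Matrix.vecMulVec idle (star idle)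
        + ((T' : ℂ))⁻¹ • (L * πbar * Lᴴ) := by
      rw [hdef j]
      rw [Matrix.mul_add, Matrix.add_mul, hLconj j]
      congr 1
      rw [Matrix.mul_smul, Matrix.smul_mul]
    rw [hexp, ptraceB_add, ptraceB_smul, ptraceB_kron _ _ hunit, hbar,
      hdef (j + 1), ptraceB_add, ptraceB_smul, ptraceB_kron _ _ hunit]
    have c1 : ((T' : ℂ) - ((j + 1 : ℕ) : ℂ)) / (T' : ℂ)
        = ((T' : ℂ) - (j : ℂ)) / (T' : ℂ) - ((T' : ℂ))⁻¹ := by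
      push_cast; field_simp; ring
    have c2 : (((j + 1 : ℕ) : ℂ)) / (T' : ℂ) = ((j : ℂ)) / (T' : ℂ) + ((T' : ℂ))⁻¹ := by
      push_cast; field_simp
    simp only [hσdef]
    rw [c1, c2, sub_smul, add_smul, smul_add, smul_sub]
    abel
end

section
/- Commuting projector refinement of the trace bound: Let L be subunitary on 𝒜⊗ℬ and P a projector on 𝒜 with (P⊗I_ℬ)L = L(P⊗I_ℬ). If π⁰,…,π^{T−1} ⪰ 0 satisfy tr_ℬ(π^{j+1}) = tr_ℬ(L π^j L†) for all j, then tr((P⊗I_ℬ) π^{j+1}) ≤ tr((P⊗I_ℬ) π^j) for all j, and hence tr((P⊗I_ℬ) Σ_j π^j) ≤ T · tr((P⊗I_ℬ) π⁰). -/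
open Matrix Kronecker Finset

open scoped ComplexOrder

private lemma psd_trace_nonneg {n : Type*} [Fintype n] [DecidableEq n]
    {M : Matrix n n ℂ} (h : M.PosSemidef) : 0 ≤ M.trace := by
  have hd : ∀ i, 0 ≤ M i i := fun i => by
    simpa [dotProduct, mulVec, Pi.single_apply] using h.dotProduct_mulVec_nonneg (Pi.single i 1)
  exact Finset.sum_nonneg fun i _ => hd i

private lemma psd_trace_mul_nonneg {n : Type*} [Fintype n] [DecidableEq n]
    {M N : Matrix n n ℂ} (hM : M.PosSemidef) (hN : N.PosSemidef) :
    0 ≤ (M * N).trace := by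
  obtain ⟨A, hA⟩ : ∃ B : Matrix n n ℂ, M = Bᴴ * B := by
    open scoped MatrixOrder in exact CStarAlgebra.nonneg_iff_eq_star_mul_self.mp hM.nonneg
  rw [hA, Matrix.mul_assoc, Matrix.trace_mul_comm]
  exact psd_trace_nonneg (hN.mul_mul_conjTranspose_same A)

private lemma subunitary_psd {n : Type*} [Fintype n] [DecidableEq n]
    {L : Matrix n n ℂ} (hL : Subunitary L) :
    ((1 : Matrix n n ℂ) - Lᴴ * L).PosSemidef := by
  rw [Matrix.posSemidef_iff_dotProduct_mulVec]
  constructor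
  · simp [Matrix.IsHermitian, sub_sub_cancel]
  · intro x
    have h1 : star x ⬝ᵥ ((1 - Lᴴ * L) *ᵥ x)
        = star x ⬝ᵥ x - star (L *ᵥ x) ⬝ᵥ (L *ᵥ x) := by
      simp [sub_mulVec, dotProduct_sub, Matrix.mulVec_mulVec, star_mulVec,
        Matrix.dotProduct_mulVec, Matrix.vecMul_vecMul]
    set φ : EuclideanSpace ℂ n := (WithLp.equiv 2 (n → ℂ)).symm x with hφ
    have h2 : star x ⬝ᵥ x = ((‖φ‖ ^ 2 : ℝ) : ℂ) := by
      have h : ‖φ‖ ^ 2 = ∑ i, ‖x i‖ ^ 2 := by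
        rw [EuclideanSpace.norm_eq, Real.sq_sqrt (by positivity)]
        rfl
      rw [h]
      push_cast
      simp [dotProduct, Complex.conj_mul']
    have h3 : star (L *ᵥ x) ⬝ᵥ (L *ᵥ x)
        = ((‖Matrix.toEuclideanLin L φ‖ ^ 2 : ℝ) : ℂ) := by
      have h : ‖Matrix.toEuclideanLin L φ‖ ^ 2 = ∑ i, ‖(L *ᵥ x) i‖ ^ 2 := by
        rw [EuclideanSpace.norm_eq, Real.sq_sqrt (by positivity)]
        rfl
      rw [h]
      push_cast
      simp [dotProduct, Complex.conj_mul']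
    rw [h1, h2, h3, ← Complex.ofReal_sub]
    have h4 : (0:ℝ) ≤ ‖φ‖ ^ 2 - ‖Matrix.toEuclideanLin L φ‖ ^ 2 := by
      have := hL φ
      nlinarith [norm_nonneg φ, norm_nonneg (Matrix.toEuclideanLin L φ)]
    exact_mod_cast Complex.real_le_real.mpr h4

private lemma trace_kron_eq {A B : Type*} [Fintype A] [Fintype B] [DecidableEq A] [DecidableEq B]
    (P : Matrix A A ℂ) (M : Matrix (A × B) (A × B) ℂ) :
    ((P ⊗ₖ (1 : Matrix B B ℂ)) * M).trace = (P * ptraceB M).trace := by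
  simp only [Matrix.trace, Matrix.diag, Matrix.mul_apply, ptraceB, Matrix.of_apply,
    Fintype.sum_prod_type, Matrix.kroneckerMap_apply, Matrix.one_apply, mul_ite, mul_one,
    mul_zero, ite_mul, zero_mul, Finset.sum_ite_eq, Finset.mem_univ, if_true, Finset.mul_sum]
  exact Finset.sum_congr rfl fun a _ => Finset.sum_comm

private lemma key_step {A B : Type*} [Fintype A] [Fintype B] [DecidableEq A] [DecidableEq B]
    (L : Matrix (A × B) (A × B) ℂ) (hL : Subunitary L)
    (P : Matrix A A ℂ) (hP : Pᴴ = P) (hP2 : P * P = P)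
    (hcomm : (P ⊗ₖ (1 : Matrix B B ℂ)) * L = L * (P ⊗ₖ (1 : Matrix B B ℂ)))
    {σ : Matrix (A × B) (A × B) ℂ} (hσ : σ.PosSemidef) :
    ((P ⊗ₖ (1 : Matrix B B ℂ)) * (L * σ * Lᴴ)).trace ≤
      ((P ⊗ₖ (1 : Matrix B B ℂ)) * σ).trace := by
  set Q : Matrix (A × B) (A × B) ℂ := P ⊗ₖ (1 : Matrix B B ℂ) with hQ
  have hP' : ∀ a c, star (P c a) = P a c := fun a c => congrFun (congrFun hP a) c
  have hQH : Qᴴ = Q := by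
    ext ⟨a, b⟩ ⟨c, d⟩
    simp only [hQ, Matrix.conjTranspose_apply, Matrix.kroneckerMap_apply, star_mul',
      Matrix.one_apply, apply_ite, star_one, star_zero, hP']
    by_cases hbd : b = d <;> simp [hbd]
    · intro h; exact absurd h.symm hbd
  have hQ2 : Q * Q = Q := by
    rw [hQ, ← Matrix.mul_kronecker_mul, hP2, Matrix.one_mul]
  have hLQ : Lᴴ * Q = Q * Lᴴ := by
    calc Lᴴ * Q = Lᴴ * Qᴴ := by rw [hQH]
    _ = (Q * L)ᴴ := by rw [Matrix.conjTranspose_mul]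
    _ = (L * Q)ᴴ := by rw [hcomm]
    _ = Qᴴ * Lᴴ := by rw [Matrix.conjTranspose_mul]
    _ = Q * Lᴴ := by rw [hQH]
  have hLLQ : (Lᴴ * L) * Q = Q * (Lᴴ * L) := by
    calc (Lᴴ * L) * Q = Lᴴ * (L * Q) := Matrix.mul_assoc _ _ _
    _ = Lᴴ * (Q * L) := by rw [← hcomm]
    _ = (Lᴴ * Q) * L := (Matrix.mul_assoc _ _ _).symm
    _ = (Q * Lᴴ) * L := by rw [hLQ]
    _ = Q * (Lᴴ * L) := Matrix.mul_assoc _ _ _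
  have hQσQ : (Q * σ * Q).PosSemidef := by
    have := hσ.mul_mul_conjTranspose_same Q
    rwa [hQH] at this
  have e1 : (Q * (L * σ * Lᴴ)).trace = ((Lᴴ * L) * (Q * σ * Q)).trace := by
    calc (Q * (L * σ * Lᴴ)).trace
        = ((L * Q) * (σ * Lᴴ)).trace := by rw [← hcomm]; simp only [Matrix.mul_assoc]
      _ = ((σ * Lᴴ) * (L * Q)).trace := Matrix.trace_mul_comm _ _
      _ = (σ * ((Lᴴ * L) * Q)).trace := by simp only [Matrix.mul_assoc]
      _ = (σ * (Q * (Lᴴ * L))).trace := by rw [hLLQ]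
      _ = (σ * ((Q * Q) * (Lᴴ * L))).trace := by rw [hQ2]
      _ = ((σ * Q) * (Q * (Lᴴ * L))).trace := by simp only [Matrix.mul_assoc]
      _ = ((Q * (Lᴴ * L)) * (σ * Q)).trace := Matrix.trace_mul_comm _ _
      _ = ((Lᴴ * L) * (Q * σ * Q)).trace := by rw [← hLLQ]; simp only [Matrix.mul_assoc]
  have e2 : (Q * σ).trace = ((1 : Matrix (A × B) (A × B) ℂ) * (Q * σ * Q)).trace := by
    calc (Q * σ).trace = ((Q * Q) * σ).trace := by rw [hQ2]
      _ = (Q * (Q * σ)).trace := by simp only [Matrix.mul_assoc]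
      _ = ((Q * σ) * Q).trace := Matrix.trace_mul_comm _ _
      _ = ((1 : Matrix (A × B) (A × B) ℂ) * (Q * σ * Q)).trace := by rw [Matrix.one_mul]
  have hdiff : 0 ≤ (Q * σ).trace - (Q * (L * σ * Lᴴ)).trace := by
    rw [e1, e2, ← Matrix.trace_sub, ← Matrix.sub_mul]
    exact psd_trace_mul_nonneg (subunitary_psd hL) hQσQ
  exact sub_nonneg.mp hdiff

/-- Commuting projector refinement of the trace bound. -/
theorem stmt12 {A B : Type*} [Fintype A] [Fintype B] [DecidableEq A] [DecidableEq B]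
    (L : Matrix (A × B) (A × B) ℂ) (hL : Subunitary L)
    (P : Matrix A A ℂ) (hP : Pᴴ = P) (hP2 : P * P = P)
    (hcomm : (P ⊗ₖ (1 : Matrix B B ℂ)) * L = L * (P ⊗ₖ (1 : Matrix B B ℂ)))
    (T : ℕ) (hT : 0 < T) (π : ℕ → Matrix (A × B) (A × B) ℂ)
    (hpsd : ∀ j < T, (π j).PosSemidef)
    (hrec : ∀ j, j + 1 < T → ptraceB (π (j + 1)) = ptraceB (L * π j * Lᴴ)) :
    (∀ j, j + 1 < T →
      ((P ⊗ₖ (1 : Matrix B B ℂ)) * π (j + 1)).trace ≤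
        ((P ⊗ₖ (1 : Matrix B B ℂ)) * π j).trace) ∧
      ((P ⊗ₖ (1 : Matrix B B ℂ)) * ∑ j ∈ Finset.range T, π j).trace ≤
        (T : ℂ) * ((P ⊗ₖ (1 : Matrix B B ℂ)) * π 0).trace := by
  have hmono : ∀ j, j + 1 < T →
      ((P ⊗ₖ (1 : Matrix B B ℂ)) * π (j + 1)).trace ≤
        ((P ⊗ₖ (1 : Matrix B B ℂ)) * π j).trace := by
    intro j hj
    have h1 : ((P ⊗ₖ (1 : Matrix B B ℂ)) * π (j + 1)).trace
        = ((P ⊗ₖ (1 : Matrix B B ℂ)) * (L * π j * Lᴴ)).trace := by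
      rw [trace_kron_eq, trace_kron_eq, hrec j hj]
    rw [h1]
    exact key_step L hL P hP hP2 hcomm (hpsd j (by omega))
  refine ⟨hmono, ?_⟩
  have hle : ∀ j < T, ((P ⊗ₖ (1 : Matrix B B ℂ)) * π j).trace ≤
      ((P ⊗ₖ (1 : Matrix B B ℂ)) * π 0).trace := by
    intro j
    induction j with
    | zero => intro _; exact le_refl _
    | succ k ih => intro hk; exact (hmono k hk).trans (ih (by omega))
  calc ((P ⊗ₖ (1 : Matrix B B ℂ)) * ∑ j ∈ Finset.range T, π j).trace
      = ∑ j ∈ Finset.range T, ((P ⊗ₖ (1 : Matrix B B ℂ)) * π j).trace := by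
        rw [Finset.mul_sum, Matrix.trace_sum]
    _ ≤ ∑ _j ∈ Finset.range T, ((P ⊗ₖ (1 : Matrix B B ℂ)) * π 0).trace :=
        Finset.sum_le_sum fun j hj => hle j (Finset.mem_range.mp hj)
    _ = (T : ℂ) * ((P ⊗ₖ (1 : Matrix B B ℂ)) * π 0).trace := by
        rw [Finset.sum_const, Finset.card_range, nsmul_eq_mul]
end
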